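/- Let {f_ξ : ξ < 𝔟} be a <*-increasing, <*-unbounded family of strictly increasing functions ℕ → ℕ. Then for every infinite b ⊆ ℕ and every unbounded Γ ⊆ 𝔟, the family of restrictions { f_ξ ↾ b : ξ ∈ Γ } is <*-unbounded in ℕ^b (the functions from b to ℕ with the mod-finite domination order). -/
import Mathlib


open Set Filter Cardinal

/-- `a ⊆* b` : `a` is almost contained in `b` (mod finite). -/
def almostLE (a b : Set ℕ) : Prop := (a \ b).Finite

/-- `f <* g` : eventual domination mod finite. -/
def domLT (f g : ℕ → ℕ) : Prop := {k | g k ≤ f k}.Finite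

/-- The bounding number 𝔟. -/
noncomputable def bNum : Cardinal :=
  sInf { c | ∃ F : Set (ℕ → ℕ), Cardinal.mk F = c ∧ ∀ g : ℕ → ℕ, ∃ f ∈ F, ¬ domLT f g }

/-- The dominating number 𝔡. -/
noncomputable def dNum : Cardinal :=
  sInf { c | ∃ F : Set (ℕ → ℕ), Cardinal.mk F = c ∧ ∀ g : ℕ → ℕ, ∃ f ∈ F, domLT g f }

/-- `c` reaps the family `A`. -/
def Reaps (c : Set ℕ) (A : Set (Set ℕ)) : Prop :=
  ∀ a ∈ A, (a ∩ c).Infinite ∧ (a \ c).Infinite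

/-- The reaping number 𝔯. -/
noncomputable def rNum : Cardinal :=
  sInf { c | ∃ A : Set (Set ℕ), Cardinal.mk A = c ∧ (∀ a ∈ A, a.Infinite) ∧
    ∀ d : Set ℕ, ¬ Reaps d A }

/-- The splitting number 𝔰. -/
noncomputable def sNum : Cardinal :=
  sInf { c | ∃ A : Set (Set ℕ), Cardinal.mk A = c ∧ ∀ b : Set ℕ, b.Infinite →
    ∃ a ∈ A, (b ∩ a).Infinite ∧ (b \ a).Infinite }

/-- `next(a,k)`, the least element of `a` above `k`. -/
noncomputable def nxt (a : Set ℕ) (k : ℕ) : ℕ := sInf {n | n ∈ a ∧ k < n}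

/-- ℕ*, the Stone–Čech remainder, realized as the space of free ultrafilters on ℕ. -/
abbrev NStar : Type := {x : Ultrafilter ℕ // (Filter.cofinite : Filter ℕ) ≤ ↑x}

/-- For `a ⊆ ℕ`, the basic clopen set `a*` of free ultrafilters containing `a`. -/
def setStar (a : Set ℕ) : Set NStar := {x | a ∈ x.1}

/-- The ideal `I_A = { a ⊆ ℕ : a* ⊆ A }`. -/
def idealOf (A : Set NStar) : Set (Set ℕ) := {a | setStar a ⊆ A}

/-- `A` is almost clopen: the closure of an open set with a unique boundary point. -/
def AlmostClopen (A : Set NStar) : Prop :=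
  (∃ U : Set NStar, IsOpen U ∧ A = closure U) ∧ ∃! x : NStar, x ∈ frontier A

/-- `x` is a tie-point as witnessed by the closed sets `A`, `B`. -/
def TiePoint {X : Type*} [TopologicalSpace X] (x : X) (A B : Set X) : Prop :=
  IsClosed A ∧ IsClosed B ∧ A ∪ B = Set.univ ∧ A ∩ B = {x} ∧
    x ∈ closure (A \ {x}) ∧ x ∈ closure (B \ {x})

/-- An almost clopen set `A` is simple of type `κ`: `I_A` has a strictly ⊆*-increasing,
⊆*-cofinal chain of order type `κ`. -/
def SimpleType (A : Set NStar) (κ : Cardinal) : Prop :=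
  ∃ a : Ordinal → Set ℕ,
    (∀ α, α < κ.ord → a α ∈ idealOf A) ∧
    (∀ α β, α < β → β < κ.ord → almostLE (a α) (a β) ∧ (a β \ a α).Infinite) ∧
    (∀ c ∈ idealOf A, ∃ α, α < κ.ord ∧ almostLE c (a α))

/-- The family `A` converges to the ultrafilter `x`. -/
def Converges (A : Set (Set ℕ)) (x : Ultrafilter ℕ) : Prop :=
  ∀ U ∈ x, Cardinal.mk {a : Set ℕ // a ∈ A ∧ (a \ U).Infinite} < Cardinal.mk A

/-- `A` is hereditarily unreapable. -/
def HeredUnreapable (A : Set (Set ℕ)) : Prop :=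
  ∀ B ⊆ A, (∃ c : Set ℕ, Reaps c B) → Cardinal.mk B < Cardinal.mk A

/-- `f <_x g` for an ultrafilter `x`. -/
def ultLT (x : Ultrafilter ℕ) (f g : ℕ → ℕ) : Prop := {n | f n < g n} ∈ x

/-- A fixed `<*`-increasing `<*`-unbounded family `{f_ξ : ξ < 𝔟}` of strictly increasing
functions. -/
def UnbddChain (f : Ordinal → ℕ → ℕ) : Prop :=
  (∀ ξ, ξ < bNum.ord → StrictMono (f ξ)) ∧
  (∀ η ξ, η < ξ → ξ < bNum.ord → domLT (f η) (f ξ)) ∧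
  (∀ g : ℕ → ℕ, ∃ ξ, ξ < bNum.ord ∧ ¬ domLT (f ξ) g)

/-- `x` is an almost `P_λ`-point. -/
def AlmostPPoint (x : Ultrafilter ℕ) (lam : Cardinal) : Prop :=
  ∀ F : Set (Set ℕ), (∀ U ∈ F, U ∈ x) → Cardinal.mk F < lam →
    ∃ p : Set ℕ, p.Infinite ∧ ∀ U ∈ F, almostLE p U

theorem stmt5 (f : Ordinal → ℕ → ℕ) (hf : UnbddChain f)
    (b : Set ℕ) (hb : b.Infinite) (Γ : Set Ordinal)
    (hΓsub : ∀ ξ ∈ Γ, ξ < bNum.ord)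
    (hΓunb : ∀ η, η < bNum.ord → ∃ ξ ∈ Γ, η ≤ ξ) :
    ∀ g : ℕ → ℕ, ∃ ξ ∈ Γ, {k | k ∈ b ∧ g k ≤ f ξ k}.Infinite := by
  intro g
  classical
  obtain ⟨ξ₀, hξ₀, hnd⟩ := hf.2.2 (fun n => g (nxt b n))
  have hmono := hf.1 ξ₀ hξ₀
  have hN : {n | g (nxt b n) ≤ f ξ₀ n}.Infinite := hnd
  have hnxt : ∀ k, nxt b k ∈ b ∧ k < nxt b k := by
    intro k
    have hne : {n | n ∈ b ∧ k < n}.Nonempty := by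
      obtain ⟨m, hm, hk⟩ := hb.exists_gt k
      exact ⟨m, hm, hk⟩
    exact Nat.sInf_mem hne
  have hS : {k | k ∈ b ∧ g k ≤ f ξ₀ k}.Infinite := by
    apply Set.infinite_of_forall_exists_gt
    intro m
    obtain ⟨n, hn, hmn⟩ := hN.exists_gt m
    exact ⟨nxt b n, ⟨(hnxt n).1,
      le_trans hn (hmono.monotone (le_of_lt (hnxt n).2))⟩,
      lt_trans hmn (hnxt n).2⟩
  obtain ⟨ξ, hξΓ, hle⟩ := hΓunb ξ₀ hξ₀
  rcases eq_or_lt_of_le hle with rfl | hlt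
  · exact ⟨ξ₀, hξΓ, hS⟩
  · have hdom := hf.2.1 ξ₀ ξ hlt (hΓsub ξ hξΓ)
    refine ⟨ξ, hξΓ, Set.Infinite.mono ?_ (hS.diff hdom)⟩
    rintro k ⟨⟨hkb, hk⟩, hk2⟩
    exact ⟨hkb, le_trans hk (le_of_lt (lt_of_not_ge hk2))⟩
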